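/- Let K be a finite set of integers, A : K → ℝ, n > 0, θ̄₀ ∈ ℝ, and ω₀ = p/q with p ∈ ℤ and q a positive integer. If there exists k₀ ∈ K with k₀ q = 2p, then (n/(2πq)) ∫₀^{2πq/n} G(θ̄₀ + n ω₀ t, t) dt = A_{k₀} sin(2θ̄₀); if no k ∈ K satisfies k q = 2p, then (n/(2πq)) ∫₀^{2πq/n} G(θ̄₀ + n ω₀ t, t) dt = 0. -/

import Mathlib

open Real intervalIntegral

lemma sin_int_zero (a c T : ℝ) (hc : c ≠ 0) (hcos : Real.cos (c * T + a) = Real.cos a) :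
    ∫ t in (0:ℝ)..T, Real.sin (c * t + a) = 0 := by
  rw [intervalIntegral.integral_comp_mul_add Real.sin hc a]
  simp [integral_sin, hcos]

lemma sin_int_const (a T : ℝ) :
    ∫ _t in (0:ℝ)..T, Real.sin a = T * Real.sin a := by
  simp [mul_comm]

theorem average_of_triaxial_force_selects_resonant_harmonic
    (K : Finset ℤ) (A : ℤ → ℝ) (n : ℝ) (hn : 0 < n) (θ₀ : ℝ)
    (p : ℤ) (q : ℕ) (hq : 0 < q) (ω₀ : ℝ) (hω₀ : ω₀ = (p : ℝ) / (q : ℝ))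
    (G : ℝ → ℝ → ℝ)
    (hG : ∀ θ t, G θ t = ∑ k ∈ K, A k * Real.sin (2 * θ - (k : ℝ) * n * t)) :
    (∀ k₀ ∈ K, k₀ * (q : ℤ) = 2 * p →
      (n / (2 * Real.pi * q)) * ∫ t in (0:ℝ)..(2 * Real.pi * q / n), G (θ₀ + n * ω₀ * t) t
        = A k₀ * Real.sin (2 * θ₀)) ∧
    ((∀ k ∈ K, k * (q : ℤ) ≠ 2 * p) →
      (n / (2 * Real.pi * q)) * ∫ t in (0:ℝ)..(2 * Real.pi * q / n), G (θ₀ + n * ω₀ * t) t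
        = 0) := by
  have hq0 : (q : ℝ) ≠ 0 := Nat.cast_ne_zero.mpr hq.ne'
  set T : ℝ := 2 * Real.pi * q / n with hT
  -- rewrite integrand
  have hkey : ∀ k : ℤ, (∫ t in (0:ℝ)..T, Real.sin (2 * (θ₀ + n * ω₀ * t) - (k:ℝ) * n * t))
      = if k * (q:ℤ) = 2 * p then T * Real.sin (2 * θ₀) else 0 := by
    intro k
    have harg : ∀ t : ℝ, 2 * (θ₀ + n * ω₀ * t) - (k:ℝ) * n * t
        = (n * (2 * p - k * q) / q) * t + 2 * θ₀ := by
      intro t; rw [hω₀]; field_simp; ring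
    by_cases hk : k * (q:ℤ) = 2 * p
    · have hc : n * (2 * (p:ℝ) - (k:ℝ) * q) / q = 0 := by
        have : (k:ℝ) * q = 2 * p := by exact_mod_cast hk
        rw [this]; ring
      simp only [harg, hc, zero_mul, zero_add, if_pos hk]
      exact sin_int_const _ _
    · have hc : n * (2 * (p:ℝ) - (k:ℝ) * q) / q ≠ 0 := by
        have h1 : (2 * (p:ℝ) - (k:ℝ) * q) ≠ 0 := by
          intro h
          apply hk
          have : (k:ℝ) * q = 2 * p := by linarith
          exact_mod_cast this
        positivity
      rw [if_neg hk]
      simp only [harg]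
      apply sin_int_zero _ _ _ hc
      have hcT : n * (2 * (p:ℝ) - (k:ℝ) * q) / q * T = (2 * p - k * q : ℤ) * (2 * Real.pi) := by
        rw [hT]; push_cast; field_simp
      rw [hcT, add_comm, Real.cos_add_int_mul_two_pi]
  have hint : (∫ t in (0:ℝ)..T, G (θ₀ + n * ω₀ * t) t)
      = ∑ k ∈ K, A k * (if k * (q:ℤ) = 2 * p then T * Real.sin (2 * θ₀) else 0) := by
    rw [intervalIntegral.integral_congr (g := fun t => ∑ k ∈ K, A k * Real.sin (2 * (θ₀ + n * ω₀ * t) - (k:ℝ) * n * t)) (fun t _ => hG _ t)]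
    rw [intervalIntegral.integral_finset_sum]
    · exact Finset.sum_congr rfl fun k _ => by
        rw [intervalIntegral.integral_const_mul, hkey]
    · intro k _
      exact (Continuous.intervalIntegrable (by continuity) _ _)
  have hT0 : T ≠ 0 := by
    rw [hT]; positivity
  constructor
  · intro k₀ hk₀ hres
    rw [hint]
    rw [Finset.sum_eq_single k₀]
    · rw [if_pos hres]
      have : n / (2 * Real.pi * ↑q) * (A k₀ * (T * Real.sin (2 * θ₀)))
          = (n / (2 * Real.pi * ↑q) * T) * (A k₀ * Real.sin (2 * θ₀)) := by ring
      rw [this, hT]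
      have hpi : (2 * Real.pi * (q:ℝ)) ≠ 0 := by positivity
      field_simp
    · intro k hk hne
      rw [if_neg, mul_zero]
      intro h
      have hq' : (0:ℤ) < q := by exact_mod_cast hq
      exact hne (by nlinarith [h, hres])
    · intro h; exact absurd hk₀ h
  · intro hall
    rw [hint]
    have : ∑ k ∈ K, A k * (if k * (q:ℤ) = 2 * p then T * Real.sin (2 * θ₀) else 0) = 0 := by
      apply Finset.sum_eq_zero
      intro k hk
      rw [if_neg (hall k hk), mul_zero]
    rw [this, mul_zero]
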